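/- Let M be a Hermitian 4×4 complex matrix satisfying the six orthogonality-preservation conditions ⟨ψ_i|(M ⊗ I)|ψ_j⟩ = 0 for all i ≠ j, where {|ψ_1⟩,...,|ψ_4⟩} = {|ψ_{00}⟩, |ψ_{11}⟩, |ψ_{31}⟩, |ψ_{32}⟩} are generalized Bell states in ℂ^4 ⊗ ℂ^4. Then there exist real numbers a_0, a_1, a_2, b_0, b_2 such that M = [[a_0+a_1+a_2, 0, b_0+b_2, 0], [0, a_0+a_1−a_2, 0, b_0−b_2], [b_0+b_2, 0, a_0−a_1−a_2, 0], [0, b_0−b_2, 0, a_0−a_1+a_2]] with respect to the standard basis. -/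

import Mathlib

open Matrix
open scoped Kronecker

/-- The generalized Bell state `|ψ_{nm}⟩ = (1/√d) ∑_j e^{2πijn/d} |j⟩ ⊗ |j ⊕_d m⟩`. -/
noncomputable def bell (d : ℕ) (n m : Fin d) : Fin d × Fin d → ℂ :=
  fun p => (1 / Real.sqrt d) *
    Complex.exp (2 * Real.pi * Complex.I * (p.1 : ℕ) * (n : ℕ) / d) *
    (if p.2 = p.1 + m then 1 else 0)

/-- The indices of the four Bell states `ψ_{00}, ψ_{11}, ψ_{31}, ψ_{32}` in `ℂ⁴ ⊗ ℂ⁴`. -/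
def bellIdx : Fin 4 → Fin 4 × Fin 4 := ![(0, 0), (1, 1), (3, 1), (3, 2)]

set_option maxHeartbeats 2000000

lemma bell4 (n m : Fin 4) (p : Fin 4 × Fin 4) :
    bell 4 n m p = (1/2 : ℂ) * Complex.I ^ ((p.1 : ℕ) * (n : ℕ)) *
      (if p.2 = p.1 + m then 1 else 0) := by
  unfold bell
  have h : (2 * Real.pi * Complex.I * (p.1 : ℕ) * (n : ℕ) / (4:ℕ) : ℂ)
      = ((p.1 : ℕ) * (n : ℕ) : ℕ) * (Real.pi / 2 * Complex.I) := by
    push_cast; ring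
  rw [h, Complex.exp_nat_mul]
  have h2 : Complex.exp (Real.pi / 2 * Complex.I) = Complex.I := by
    rw [Complex.exp_mul_I]
    norm_num [← Complex.ofReal_cos, ← Complex.ofReal_sin, Real.cos_pi_div_two, Real.sin_pi_div_two]
  have h4 : Real.sqrt (4:ℕ) = 2 := by
    rw [show ((4:ℕ):ℝ) = 2^2 by norm_num, Real.sqrt_sq (by norm_num)]
  rw [h2, h4]; push_cast; ring


/-- If a Hermitian `4×4` matrix `M` satisfies the six orthogonality-preservation
conditions `⟨ψ_i|(M ⊗ I)|ψ_j⟩ = 0` for `i ≠ j` among `ψ_{00}, ψ_{11}, ψ_{31}, ψ_{32}`,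
then `M` has the stated five-parameter real form. -/
theorem op_condition_forces_form (M : Matrix (Fin 4) (Fin 4) ℂ)
    (hM : M.IsHermitian)
    (hOP : ∀ i j : Fin 4, i ≠ j →
      star (bell 4 (bellIdx i).1 (bellIdx i).2) ⬝ᵥ
        ((M ⊗ₖ (1 : Matrix (Fin 4) (Fin 4) ℂ)).mulVec
          (bell 4 (bellIdx j).1 (bellIdx j).2)) = 0) :
    ∃ a0 a1 a2 b0 b2 : ℝ,
      M = !![((a0 + a1 + a2 : ℝ) : ℂ), 0, ((b0 + b2 : ℝ) : ℂ), 0;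
             0, ((a0 + a1 - a2 : ℝ) : ℂ), 0, ((b0 - b2 : ℝ) : ℂ);
             ((b0 + b2 : ℝ) : ℂ), 0, ((a0 - a1 - a2 : ℝ) : ℂ), 0;
             0, ((b0 - b2 : ℝ) : ℂ), 0, ((a0 - a1 + a2 : ℝ) : ℂ)] := by
  have h01 := hOP 0 1 (by decide)
  have h02 := hOP 0 2 (by decide)
  have h03 := hOP 0 3 (by decide)
  have h12 := hOP 1 2 (by decide)
  have h13 := hOP 1 3 (by decide)
  have h23 := hOP 2 3 (by decide)
  simp only [bellIdx, bell4, dotProduct, Matrix.mulVec, Fintype.sum_prod_type,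
    Fin.sum_univ_four, kroneckerMap_apply, Matrix.one_apply,
    Matrix.cons_val_zero, Matrix.cons_val_one, Matrix.head_cons,
    Matrix.cons_val_two, Matrix.cons_val_three, Matrix.tail_cons,
    Pi.star_apply, star_mul'] at h01 h02 h03 h12 h13 h23
  norm_num [show ((2:Fin 4):ℕ)=2 from rfl, show ((3:Fin 4):ℕ)=3 from rfl,
    show ((4:Fin 4):ℕ)=0 from rfl, show ((5:Fin 4):ℕ)=1 from rfl,
    show ((6:Fin 4):ℕ)=2 from rfl,
    Fin.ext_iff, Fin.val_add, pow_succ, Complex.I_mul_I, star_pow, Complex.conj_I]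
    at h01 h02 h03 h12 h13 h23
  -- hermitian entries
  have hH : ∀ i j, (starRingEnd ℂ) (M i j) = M j i := by
    intro i j
    simpa [Matrix.conjTranspose_apply] using congrFun (congrFun hM j) i
  -- off-diagonal vanishing
  have hBDm : M 1 0 - M 3 2 = 0 := by linear_combination 2*h01 + 2*h02
  have unI : ∀ z : ℂ, Complex.I * z = 0 → z = 0 := by
    intro z hz
    rcases mul_eq_zero.mp hz with h | h
    · exact absurd h Complex.I_ne_zero
    · exact h
  have hACp : M 0 3 + M 2 1 = 0 := unI _ (by linear_combination 2*h13 + 2*h23)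
  have hBDp : M 1 0 + M 3 2 = 0 := unI _ (by linear_combination 2*h23 - 2*h13)
  have hACm : M 0 3 - M 2 1 = 0 := unI _ (by linear_combination 2*h02 - 2*h01)
  have hA : M 0 3 = 0 := by linear_combination (hACp + hACm)/2
  have hC : M 2 1 = 0 := by linear_combination (hACp - hACm)/2
  have hB : M 1 0 = 0 := by linear_combination (hBDp + hBDm)/2
  have hD : M 3 2 = 0 := by linear_combination (hBDp - hBDm)/2
  have hA' : M 3 0 = 0 := by rw [← hH 0 3, hA]; simp
  have hB' : M 0 1 = 0 := by rw [← hH 1 0, hB]; simp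
  have hC' : M 1 2 = 0 := by rw [← hH 2 1, hC]; simp
  have hD' : M 2 3 = 0 := by rw [← hH 3 2, hD]; simp
  -- diagonal real, alternating-sum relation
  have hd : ∀ i, M i i = ((M i i).re : ℂ) :=
    fun i => (Complex.conj_eq_iff_re.mp (hH i i)).symm
  have h12' : M 0 0 - M 1 1 + M 2 2 - M 3 3 = 0 := by
    linear_combination 4*h12 - (M 1 1 + M 3 3) * Complex.I_sq
  have hr : (M 0 0).re - (M 1 1).re + (M 2 2).re - (M 3 3).re = 0 := by
    have := congrArg Complex.re h12'
    simpa using this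
  -- off-diagonal real entries
  have h03' : (starRingEnd ℂ) (M 0 2) - M 0 2 + Complex.I * M 1 3
      - Complex.I * (starRingEnd ℂ) (M 1 3) = 0 := by
    rw [hH 0 2, hH 1 3]
    linear_combination 4*h03
  have hre := congrArg Complex.re h03'
  have him := congrArg Complex.im h03'
  simp [Complex.add_re, Complex.sub_re, Complex.mul_re, Complex.add_im, Complex.sub_im,
    Complex.mul_im] at hre him
  have h02r : M 0 2 = ((M 0 2).re : ℂ) := by
    apply Complex.ext
    · simp
    · simp; linarith
  have h13r : M 1 3 = ((M 1 3).re : ℂ) := by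
    apply Complex.ext
    · simp
    · simp; linarith
  have h20 : M 2 0 = ((M 0 2).re : ℂ) := by
    rw [← hH 0 2, h02r]; simp
  have h31 : M 3 1 = ((M 1 3).re : ℂ) := by
    rw [← hH 1 3, h13r]; simp
  have hrC : ((M 0 0).re : ℂ) - ((M 1 1).re : ℂ) + ((M 2 2).re : ℂ) - ((M 3 3).re : ℂ) = 0 := by
    exact_mod_cast congrArg (Complex.ofReal) hr
  refine ⟨((M 0 0).re + (M 1 1).re + (M 2 2).re + (M 3 3).re)/4,
    ((M 0 0).re + (M 1 1).re - (M 2 2).re - (M 3 3).re)/4,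
    ((M 0 0).re - (M 1 1).re)/2,
    ((M 0 2).re + (M 1 3).re)/2, ((M 0 2).re - (M 1 3).re)/2, ?_⟩
  ext i j
  fin_cases i <;> fin_cases j <;>
    simp only [Matrix.cons_val', Matrix.cons_val_zero, Matrix.cons_val_one,
      Matrix.head_cons, Matrix.cons_val_fin_one, Matrix.empty_val',
      Matrix.cons_val_two, Matrix.cons_val_three, Matrix.tail_cons, Matrix.of_apply,
      Fin.mk_zero, Fin.mk_one, Fin.isValue,
      show ((⟨2, by omega⟩ : Fin 4)) = 2 from rfl, show ((⟨3, by omega⟩ : Fin 4)) = 3 from rfl]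
  · conv_lhs => rw [hd 0]
    push_cast; ring
  · exact hB'
  · conv_lhs => rw [h02r]
    push_cast; ring
  · exact hA
  · exact hB
  · conv_lhs => rw [hd 1]
    push_cast; ring
  · exact hC'
  · conv_lhs => rw [h13r]
    push_cast; ring
  · conv_lhs => rw [h20]
    push_cast; ring
  · exact hC
  · conv_lhs => rw [hd 2]
    push_cast; linear_combination hrC/2
  · exact hD'
  · exact hA'
  · conv_lhs => rw [h31]
    simp only [Matrix.vecHead]
    push_cast; ring
  · exact hD
  · conv_lhs => rw [hd 3]
    simp only [Matrix.vecHead]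
    push_cast; linear_combination -hrC/2
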